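/- For positive reals λ_BS, λ_e and α > 0: ∫₀^∞ exp(-πλ_BS D₀²·2^{-2t/α})/(1 + (λ_e/λ_BS)·2^{2t/α}) dt = (α/(2 ln 2))·exp(πλ_e D₀²)·[E₁(πλ_e D₀²) - E₁(π(λ_e + λ_BS)D₀²)], where E₁ is the exponential integral and D₀ > 0. -/

import Mathlib

open MeasureTheory Real

/-- The exponential integral `E₁(x) = ∫ₓ^∞ e^{-t}/t dt`. -/
noncomputable def expIntegralE1 (x : ℝ) : ℝ := ∫ t in Set.Ioi x, Real.exp (-t) / t

/-- `e^{-s}/s` is integrable on `(a, ∞)` for `a > 0`. -/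
lemma integrableOn_exp_neg_div (a : ℝ) (ha : 0 < a) :
    IntegrableOn (fun s : ℝ => Real.exp (-s) / s) (Set.Ioi a) := by
  have hg : IntegrableOn (fun s : ℝ => Real.exp (-s) * a⁻¹) (Set.Ioi a) := by
    have := (exp_neg_integrableOn_Ioi a (b := 1) one_pos).mul_const a⁻¹
    simpa [IntegrableOn] using this
  refine hg.integrable.mono' ?_ ?_
  · exact ((Real.measurable_exp.comp measurable_neg).div measurable_id).aestronglyMeasurable
  · filter_upwards [self_mem_ae_restrict measurableSet_Ioi] with s hs
    have hs' : a < s := hs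
    rw [Real.norm_eq_abs, abs_div, abs_of_pos (Real.exp_pos _),
      abs_of_pos (ha.trans hs'), div_eq_mul_inv]
    gcongr

lemma e1_sub (a b : ℝ) (ha : 0 < a) (hab : a ≤ b) :
    expIntegralE1 a - expIntegralE1 b = ∫ s in Set.Ioo a b, Real.exp (-s) / s := by
  have hInt : IntegrableOn (fun s : ℝ => Real.exp (-s) / s) (Set.Ioi a) :=
    integrableOn_exp_neg_div a ha
  have hsplit : (∫ s in Set.Ioc a b, Real.exp (-s) / s)
      + (∫ s in Set.Ioi b, Real.exp (-s) / s) = expIntegralE1 a := by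
    rw [expIntegralE1, ← Set.Ioc_union_Ioi_eq_Ioi hab]
    exact (setIntegral_union (Set.Ioc_disjoint_Ioi le_rfl) measurableSet_Ioi
      (hInt.mono_set Set.Ioc_subset_Ioi_self)
      (hInt.mono_set (Set.Ioi_subset_Ioi hab))).symm
  have h2 : expIntegralE1 a - expIntegralE1 b = ∫ s in Set.Ioc a b, Real.exp (-s) / s := by
    rw [← hsplit]; unfold expIntegralE1; ring
  rw [h2, integral_Ioc_eq_integral_Ioo]

theorem stmt_10 (lBS le D₀ α : ℝ) (hBS : 0 < lBS) (he : 0 < le) (hD : 0 < D₀)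
    (hα : 0 < α) :
    ∫ t in Set.Ioi (0:ℝ),
      Real.exp (-(π * lBS * D₀ ^ 2 * (2:ℝ) ^ (-(2 * t / α)))) /
        (1 + (le / lBS) * (2:ℝ) ^ (2 * t / α))
    = α / (2 * Real.log 2) * Real.exp (π * le * D₀ ^ 2) *
        (expIntegralE1 (π * le * D₀ ^ 2) - expIntegralE1 (π * (le + lBS) * D₀ ^ 2)) := by
  set a : ℝ := π * le * D₀ ^ 2 with ha_def
  set c : ℝ := π * lBS * D₀ ^ 2 with hc_def
  have ha : 0 < a := by positivity
  have hc : 0 < c := by positivity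
  have hL : 0 < Real.log 2 := Real.log_pos one_lt_two
  set k : ℝ := 2 * Real.log 2 / α with hk_def
  have hk : 0 < k := by positivity
  have hαk : α / (2 * Real.log 2) = k⁻¹ := by rw [hk_def, inv_div]
  -- the substitution map
  set φ : ℝ → ℝ := fun t => a + c * Real.exp (-(k * t)) with hφ_def
  set φ' : ℝ → ℝ := fun t => -(c * k * Real.exp (-(k * t))) with hφ'_def
  have hderiv : ∀ t : ℝ, HasDerivAt φ (φ' t) t := by
    intro t
    have h1 : HasDerivAt (fun t : ℝ => -(k * t)) (-k) t := by
      simpa using ((hasDerivAt_id t).const_mul (-k)).congr_deriv (by ring)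
    have h3 := ((h1.exp).const_mul c).const_add a
    refine h3.congr_deriv ?_
    show c * (Real.exp (-(k * t)) * -k) = -(c * k * Real.exp (-(k * t))); ring
  have hinj : Set.InjOn φ (Set.Ioi 0) := by
    intro t₁ _ t₂ _ h
    simp only [hφ_def] at h
    have h' : Real.exp (-(k * t₁)) = Real.exp (-(k * t₂)) :=
      mul_left_cancel₀ hc.ne' (add_left_cancel h)
    have h'' := neg_injective (Real.exp_injective h')
    exact mul_left_cancel₀ hk.ne' h''
  have himg : φ '' Set.Ioi 0 = Set.Ioo a (a + c) := by
    ext s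
    constructor
    · rintro ⟨t, ht, rfl⟩
      have ht' : (0:ℝ) < t := ht
      have h1 : 0 < Real.exp (-(k * t)) := Real.exp_pos _
      have h2 : Real.exp (-(k * t)) < 1 := by
        rw [Real.exp_lt_one_iff]; nlinarith
      constructor <;> simp only [hφ_def] <;> nlinarith
    · rintro ⟨h1, h2⟩
      set u : ℝ := (s - a) / c with hu_def
      have hu0 : 0 < u := by apply div_pos <;> linarith
      have hu1 : u < 1 := by rw [div_lt_one hc]; linarith
      refine ⟨-(Real.log u) / k, ?_, ?_⟩
      · have : Real.log u < 0 := Real.log_neg hu0 hu1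
        exact div_pos (by linarith) hk
      · have hkk : -(k * (-(Real.log u) / k)) = Real.log u := by
          field_simp
        simp only [hφ_def, hkk, Real.exp_log hu0]
        have hcu : c * u = s - a := by rw [hu_def]; field_simp
        linarith
  have key := integral_image_eq_integral_abs_deriv_smul (f := φ) (f' := φ')
    measurableSet_Ioi (fun x _ => (hderiv x).hasDerivWithinAt) hinj
    (fun s => α / (2 * Real.log 2) * Real.exp a * (Real.exp (-s) / s))
  rw [himg] at key
  -- rewrite LHS integrand
  have hcongr : ∫ t in Set.Ioi (0:ℝ),
      Real.exp (-(c * (2:ℝ) ^ (-(2 * t / α)))) /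
        (1 + (le / lBS) * (2:ℝ) ^ (2 * t / α))
      = ∫ t in Set.Ioi (0:ℝ),
        |φ' t| • (α / (2 * Real.log 2) * Real.exp a *
          (Real.exp (-(φ t)) / (φ t))) := by
    apply setIntegral_congr_fun measurableSet_Ioi
    intro t ht
    have hrw1 : (2:ℝ) ^ (-(2 * t / α)) = Real.exp (-(k * t)) := by
      rw [Real.rpow_def_of_pos (by norm_num : (0:ℝ) < 2)]
      congr 1
      rw [hk_def]; ring
    have hrw2 : (2:ℝ) ^ (2 * t / α) = Real.exp (k * t) := by
      rw [Real.rpow_def_of_pos (by norm_num : (0:ℝ) < 2)]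
      congr 1
      rw [hk_def]; ring
    have hle : le / lBS = a / c := by
      rw [ha_def, hc_def]
      field_simp
    simp only [hφ_def, hφ'_def, smul_eq_mul, hrw1, hrw2, hle]
    set E : ℝ := Real.exp (-(k * t)) with hE_def
    have hE : 0 < E := Real.exp_pos _
    have hexp : Real.exp (k * t) = E⁻¹ := by
      rw [hE_def, Real.exp_neg, inv_inv]
    rw [hexp, abs_neg, abs_of_pos (by positivity)]
    have hden : 0 < a + c * E := by positivity
    have hP : 0 < 1 + a / c * E⁻¹ := by positivity
    have hLHS : Real.exp (-(c * E)) / (1 + a / c * E⁻¹)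
        = c * E * Real.exp (-(c * E)) / (a + c * E) := by
      rw [div_eq_div_iff hP.ne' hden.ne']
      field_simp
      ring
    have hRHS : c * k * E * (α / (2 * Real.log 2) * Real.exp a *
          (Real.exp (-(a + c * E)) / (a + c * E)))
        = c * E * Real.exp (-(c * E)) / (a + c * E) := by
      rw [show -(a + c * E) = -a + -(c * E) by ring, Real.exp_add, Real.exp_neg a, hαk]
      field_simp
    rw [hLHS, ← hRHS]
  rw [hcongr, ← key]
  have hb : π * (le + lBS) * D₀ ^ 2 = a + c := by
    rw [ha_def, hc_def]; ring
  rw [hb, e1_sub a (a + c) ha (by linarith)]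
  rw [← integral_const_mul]
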